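/- Matrices A and B with cardinal entries (indexed by V and W) are shift equivalent if and only if the C*-correspondences X(A) and X(B) are shift equivalent: i.e., there exist a lag m ≥ 1, a c₀(V)-c₀(W) correspondence R and a c₀(W)-c₀(V) correspondence S with unitary isomorphisms X(A)^⊗m ≅ R ⊗ S, X(B)^⊗m ≅ S ⊗ R, S ⊗ X(A) ≅ X(B) ⊗ S, X(A) ⊗ R ≅ R ⊗ X(B). -/

import Mathlib

open TensorProduct

/-- A bundled finite-dimensional complex vector space (modelling, up to unitary
isomorphism, one compression `p_v E p_w` of a correspondence between `c₀`
algebras of finite sets). -/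
structure FdVec : Type 1 where
  carrier : Type
  [acg : AddCommGroup carrier]
  [mod : Module ℂ carrier]
  [fd : FiniteDimensional ℂ carrier]

attribute [instance] FdVec.acg FdVec.mod FdVec.fd

/-- A correspondence from `c₀(V)` to `c₀(W)` modelled as the family of its
compressions; the interior tensor product of correspondences is given by
`(X ⊗ Y) v u = ⨁_w (X v w) ⊗ (Y w u)`. -/
noncomputable def hmul {V W U : Type} [Fintype W] (X : V → W → FdVec)
    (Y : W → U → FdVec) : V → U → FdVec :=
  fun v u => ⟨Π w : W, (X v w).carrier ⊗[ℂ] (Y w u).carrier⟩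

/-- `hpow X k` is the `(k+1)`-fold interior tensor power `X^{⊗(k+1)}`. -/
noncomputable def hpow {V : Type} [Fintype V] (X : V → V → FdVec) : ℕ → (V → V → FdVec)
  | 0 => X
  | k + 1 => hmul X (hpow X k)

/-- Unitary isomorphism of correspondences: since the bimodule actions are by
the coordinate projections, it amounts to isomorphisms of all compressions. -/
def HIso {V W : Type} (X Y : V → W → FdVec) : Prop :=
  ∀ v w, Nonempty ((X v w).carrier ≃ₗ[ℂ] (Y v w).carrier)

/-- The correspondence `X(A)` of a matrix `A` over `ℕ`: `p_v X(A) p_w` has an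
orthonormal basis indexed by the edges from `v` to `w`. -/
noncomputable def XofMat {V W : Type} (A : Matrix V W ℕ) : V → W → FdVec :=
  fun v w => ⟨Fin (A v w) → ℂ⟩

section Aux

open Module

lemma finrank_XofMat {V W : Type} (A : Matrix V W ℕ) (v : V) (w : W) :
    finrank ℂ ((XofMat A v w).carrier) = A v w := by
  exact Module.finrank_fin_fun ℂ

lemma finrank_hmul {V W U : Type} [Fintype W] (X : V → W → FdVec) (Y : W → U → FdVec)
    (v : V) (u : U) :
    finrank ℂ ((hmul X Y v u).carrier) =
      ∑ w : W, finrank ℂ (X v w).carrier * finrank ℂ (Y w u).carrier := by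
  exact (Module.finrank_pi_fintype ℂ (M := fun w => (X v w).carrier ⊗[ℂ] (Y w u).carrier)).trans
    (by simp [Module.finrank_tensorProduct])

lemma finrank_hpow_XofMat {V : Type} [Fintype V] [DecidableEq V] (A : Matrix V V ℕ) (k : ℕ) (v w : V) :
    finrank ℂ ((hpow (XofMat A) k v w).carrier) = (A ^ (k + 1)) v w := by
  induction k generalizing v w with
  | zero => exact (finrank_XofMat A v w).trans (by simp)
  | succ k ih =>
    rw [show k + 1 + 1 = (k + 1) + 1 from rfl, pow_succ', Matrix.mul_apply]
    exact (finrank_hmul (XofMat A) (hpow (XofMat A) k) v w).trans (by simp only [finrank_XofMat, ih])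

lemma hiso_iff {V W : Type} (X Y : V → W → FdVec) :
    HIso X Y ↔ ∀ v w, finrank ℂ (X v w).carrier = finrank ℂ (Y v w).carrier := by
  constructor
  · intro h v w; exact ((FiniteDimensional.nonempty_linearEquiv_iff_finrank_eq).mp (h v w))
  · intro h v w; exact FiniteDimensional.nonempty_linearEquiv_of_finrank_eq (h v w)

end Aux

/-- matrices `A` and `B` are shift equivalent if and only if the
C*-correspondences `X(A)` and `X(B)` are shift equivalent, i.e. there are a lag
`m = k + 1 ≥ 1` and correspondences `R`, `S` with
`X(A)^⊗m ≅ R ⊗ S`, `X(B)^⊗m ≅ S ⊗ R`, `S ⊗ X(A) ≅ X(B) ⊗ S`,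
`X(A) ⊗ R ≅ R ⊗ X(B)`. -/
theorem matrix_se_iff_correspondence_se
    {V W : Type} [Fintype V] [Fintype W] [DecidableEq V] [DecidableEq W]
    (A : Matrix V V ℕ) (B : Matrix W W ℕ) :
    (∃ m : ℕ, 1 ≤ m ∧ ∃ (R : Matrix V W ℕ) (S : Matrix W V ℕ),
      A ^ m = R * S ∧ B ^ m = S * R ∧ S * A = B * S ∧ A * R = R * B) ↔
    (∃ (k : ℕ) (R : V → W → FdVec) (S : W → V → FdVec),
      HIso (hpow (XofMat A) k) (hmul R S) ∧
      HIso (hpow (XofMat B) k) (hmul S R) ∧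
      HIso (hmul S (XofMat A)) (hmul (XofMat B) S) ∧
      HIso (hmul (XofMat A) R) (hmul R (XofMat B))) := by
  constructor
  · rintro ⟨m, hm, R, S, h1, h2, h3, h4⟩
    obtain ⟨k, rfl⟩ := Nat.exists_eq_add_of_le hm
    refine ⟨k, XofMat R, XofMat S, ?_, ?_, ?_, ?_⟩ <;>
      rw [hiso_iff] <;> intro v w <;>
      simp only [finrank_hpow_XofMat, finrank_hmul, finrank_XofMat]
    · rw [show k + 1 = 1 + k from Nat.add_comm k 1, h1, Matrix.mul_apply]
    · rw [show k + 1 = 1 + k from Nat.add_comm k 1, h2, Matrix.mul_apply]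
    · rw [show (∑ u, S v u * A u w) = (S * A) v w from (Matrix.mul_apply).symm, h3,
        Matrix.mul_apply]
    · rw [show (∑ u, A v u * R u w) = (A * R) v w from (Matrix.mul_apply).symm, h4,
        Matrix.mul_apply]
  · rintro ⟨k, R, S, h1, h2, h3, h4⟩
    rw [hiso_iff] at h1 h2 h3 h4
    refine ⟨k + 1, Nat.le_add_left 1 k, Matrix.of (fun v w => Module.finrank ℂ (R v w).carrier),
      Matrix.of (fun w v => Module.finrank ℂ (S w v).carrier), ?_, ?_, ?_, ?_⟩ <;>
      ext v w <;> rw [Matrix.mul_apply]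
    · have := h1 v w
      rwa [finrank_hpow_XofMat, finrank_hmul] at this
    · have := h2 v w
      rwa [finrank_hpow_XofMat, finrank_hmul] at this
    · have := h3 v w
      rw [finrank_hmul, finrank_hmul] at this
      simpa [finrank_XofMat, Matrix.mul_apply] using this
    · have := h4 v w
      rw [finrank_hmul, finrank_hmul] at this
      simpa [finrank_XofMat, Matrix.mul_apply] using this
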